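/- Let α ∈ (0,1) and define, for a measurable h : (0,∞) → ℝ with |h(s)| ≤ C(1+s)^{−γ} and γ > 1, M(t) = ∫_0^t h(s)(t−s)^{α−1} ds and M_∞ = ∫_0^∞ h(s) ds. Then for any δ ∈ (0,1/2): |t^{1−α}M(t) − M_∞| ≤ t^{1−α}∫_0^{δt}|h(s)|((t−s)^{α−1} − t^{α−1})ds + t^{1−α}∫_{δt}^t |h(s)|(t−s)^{α−1} ds + ∫_{δt}^∞ |h(s)| ds, and each term can be made smaller than ε for suitable δ and all large t; in particular each of the three bounds holds: the first is ≤ C'δ, the second is ≤ C' t^{1−γ}, the third tends to 0 as t → ∞. -/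

import Mathlib

open MeasureTheory Real Set Filter intervalIntegral

theorem stmt19 (α γ C : ℝ) (hα : α ∈ Set.Ioo (0:ℝ) 1) (hγ : 1 < γ) (hC : 0 < C)
    (h : ℝ → ℝ) (hmeas : Measurable h)
    (hbound : ∀ s ≥ (0:ℝ), |h s| ≤ C * (1 + s) ^ (-γ)) :
    ∀ δ ∈ Set.Ioo (0:ℝ) (1/2),
      (∀ t > (0:ℝ),
        |t ^ (1 - α) * (∫ s in (0:ℝ)..t, h s * (t - s) ^ (α - 1)) -
            ∫ s in Set.Ioi (0:ℝ), h s| ≤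
          t ^ (1 - α) * (∫ s in (0:ℝ)..δ * t, |h s| * ((t - s) ^ (α - 1) - t ^ (α - 1))) +
          t ^ (1 - α) * (∫ s in δ * t..t, |h s| * (t - s) ^ (α - 1)) +
          ∫ s in Set.Ioi (δ * t), |h s|) ∧
      (∃ C' > (0:ℝ),
        (∀ t ≥ (2:ℝ),
          t ^ (1 - α) * (∫ s in (0:ℝ)..δ * t, |h s| * ((t - s) ^ (α - 1) - t ^ (α - 1))) ≤
            C' * δ) ∧
        (∀ t ≥ (2:ℝ),
          t ^ (1 - α) * (∫ s in δ * t..t, |h s| * (t - s) ^ (α - 1)) ≤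
            C' * t ^ (1 - γ))) ∧
      Tendsto (fun t : ℝ => ∫ s in Set.Ioi (δ * t), |h s|) atTop (nhds 0) := by
  obtain ⟨hα0, hα1⟩ := hα
  have hα1' : α - 1 ≤ 0 := by linarith
  -- measurability of the dominating function
  have gmeas : Measurable fun s : ℝ => C * (1 + s) ^ (-γ) :=
    measurable_const.mul ((measurable_const.add measurable_id).pow measurable_const)
  -- integrability of the dominating function on (0, ∞)
  have gint : IntegrableOn (fun s : ℝ => C * (1 + s) ^ (-γ)) (Ioi (0:ℝ)) := by
    have h1 : IntegrableOn (fun s : ℝ => C * (1 + s) ^ (-γ)) (Ioc (0:ℝ) 1) := by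
      refine (ContinuousOn.integrableOn_compact isCompact_Icc ?_).mono_set Ioc_subset_Icc_self
      exact continuousOn_const.mul
        (((continuous_const.add continuous_id).continuousOn).rpow_const
          (fun x hx => Or.inl (by show (1:ℝ) + x ≠ 0; intro hh; nlinarith [hx.1])))
    have h2 : IntegrableOn (fun s : ℝ => C * (1 + s) ^ (-γ)) (Ioi (1:ℝ)) := by
      refine Integrable.mono'
        ((integrableOn_Ioi_rpow_of_lt (by linarith : -γ < -1) one_pos).const_mul C)
        gmeas.aestronglyMeasurable ?_
      filter_upwards [ae_restrict_mem measurableSet_Ioi] with s hs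
      have hs1 : (0:ℝ) < 1 + s := by simp only [mem_Ioi] at hs; linarith
      have hb : (1 + s) ^ (-γ) ≤ s ^ (-γ) :=
        Real.rpow_le_rpow_of_nonpos (by simp only [mem_Ioi] at hs; linarith)
          (by linarith) (by linarith)
      rw [Real.norm_eq_abs, abs_mul, abs_of_pos hC, abs_of_pos (Real.rpow_pos_of_pos hs1 _)]
      exact mul_le_mul_of_nonneg_left hb hC.le
    have := h1.union h2
    rwa [Ioc_union_Ioi_eq_Ioi zero_le_one] at this
  -- h and |h| are integrable on (0, ∞)
  have hint : IntegrableOn h (Ioi (0:ℝ)) := by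
    refine Integrable.mono' gint hmeas.aestronglyMeasurable ?_
    filter_upwards [ae_restrict_mem measurableSet_Ioi] with s hs
    exact hbound s (le_of_lt hs)
  have habs : IntegrableOn (fun s => |h s|) (Ioi (0:ℝ)) := hint.abs
  set K := ∫ s in Set.Ioi (0:ℝ), |h s| with hK
  have hK0 : 0 ≤ K := setIntegral_nonneg measurableSet_Ioi (fun s _ => abs_nonneg _)
  -- |h s| ≤ C for s ≥ 0
  have hCb : ∀ s : ℝ, 0 ≤ s → |h s| ≤ C := by
    intro s hs
    refine (hbound s hs).trans ?_
    calc C * (1 + s) ^ (-γ) ≤ C * 1 := by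
          refine mul_le_mul_of_nonneg_left ?_ hC.le
          exact Real.rpow_le_one_of_one_le_of_nonpos (by linarith) (by linarith)
      _ = C := mul_one C
  intro δ hδ
  obtain ⟨hδ0, hδ2⟩ := hδ
  have hδ1 : δ < 1 := by linarith
  -- generic integrability lemmas for fixed t > 0
  have key : ∀ t : ℝ, 0 < t →
      IntegrableOn (fun s => h s * (t - s) ^ (α - 1)) (Ioc 0 t) ∧
      IntegrableOn (fun s => |h s| * (t - s) ^ (α - 1)) (Ioc 0 t) := by
    intro t ht
    have Grt : IntervalIntegrable (fun s : ℝ => (t - s) ^ (α - 1)) volume 0 t := by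
      have := (intervalIntegrable_rpow' (by linarith : (-1:ℝ) < α - 1)
        (a := 0) (b := t)).comp_sub_left t
      simpa using this.symm
    have Gmeas : Measurable fun s : ℝ => (t - s) ^ (α - 1) :=
      (measurable_const.sub measurable_id).pow measurable_const
    have Gdom : IntegrableOn (fun s : ℝ => C * (t - s) ^ (α - 1)) (Ioc 0 t) :=
      ((Grt.const_mul C).1)
    constructor
    · refine Integrable.mono' Gdom (hmeas.mul Gmeas).aestronglyMeasurable ?_
      filter_upwards [ae_restrict_mem measurableSet_Ioc] with s hs
      rw [Real.norm_eq_abs, abs_mul, abs_of_nonneg (Real.rpow_nonneg (by linarith [hs.2]) _)]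
      exact mul_le_mul_of_nonneg_right (hCb s hs.1.le)
        (Real.rpow_nonneg (by linarith [hs.2]) _)
    · refine Integrable.mono' Gdom (hmeas.abs.mul Gmeas).aestronglyMeasurable ?_
      filter_upwards [ae_restrict_mem measurableSet_Ioc] with s hs
      rw [Real.norm_eq_abs, abs_mul, abs_abs,
        abs_of_nonneg (Real.rpow_nonneg (by linarith [hs.2]) _)]
      exact mul_le_mul_of_nonneg_right (hCb s hs.1.le)
        (Real.rpow_nonneg (by linarith [hs.2]) _)
  refine ⟨?_, ?_, ?_⟩
  · -- Part 1 : the decomposition inequality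
    intro t ht
    set a := δ * t with ha
    have ha0 : 0 < a := mul_pos hδ0 ht
    have hat : a < t := by
      have : δ * t < 1 * t := mul_lt_mul_of_pos_right hδ1 ht
      simpa using this
    obtain ⟨Hint, Aint⟩ := key t ht
    have Hint1 : IntervalIntegrable (fun s => h s * (t - s) ^ (α - 1)) volume 0 a :=
      (intervalIntegrable_iff_integrableOn_Ioc_of_le ha0.le).2
        (Hint.mono_set (Ioc_subset_Ioc le_rfl hat.le))
    have Hint2 : IntervalIntegrable (fun s => h s * (t - s) ^ (α - 1)) volume a t :=
      (intervalIntegrable_iff_integrableOn_Ioc_of_le hat.le).2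
        (Hint.mono_set (Ioc_subset_Ioc ha0.le le_rfl))
    have habs1 : IntervalIntegrable (fun s => |h s|) volume 0 a :=
      (intervalIntegrable_iff_integrableOn_Ioc_of_le ha0.le).2
        (habs.mono_set Ioc_subset_Ioi_self)
    have hh1 : IntervalIntegrable h volume 0 a :=
      (intervalIntegrable_iff_integrableOn_Ioc_of_le ha0.le).2
        (hint.mono_set Ioc_subset_Ioi_self)
    -- split M(t)
    have hsplit : (∫ s in (0:ℝ)..t, h s * (t - s) ^ (α - 1)) =
        (∫ s in (0:ℝ)..a, h s * (t - s) ^ (α - 1)) +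
        (∫ s in a..t, h s * (t - s) ^ (α - 1)) :=
      (integral_add_adjacent_intervals Hint1 Hint2).symm
    -- split M∞
    have hMsplit : (∫ s in Set.Ioi (0:ℝ), h s) =
        (∫ s in (0:ℝ)..a, h s) + ∫ s in Set.Ioi a, h s := by
      rw [intervalIntegral.integral_of_le ha0.le,
        ← setIntegral_union (Ioc_disjoint_Ioi le_rfl) measurableSet_Ioi
          (hint.mono_set Ioc_subset_Ioi_self) (hint.mono_set (Ioi_subset_Ioi ha0.le)),
        Ioc_union_Ioi_eq_Ioi ha0.le]
    have hpow1 : t ^ (1 - α) * t ^ (α - 1) = 1 := by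
      rw [← Real.rpow_add ht]; norm_num
    -- rearrange
    have hre : t ^ (1 - α) * (∫ s in (0:ℝ)..t, h s * (t - s) ^ (α - 1)) -
        ∫ s in Set.Ioi (0:ℝ), h s =
        ((∫ s in (0:ℝ)..a, t ^ (1 - α) * (h s * (t - s) ^ (α - 1)) - h s)) +
        (t ^ (1 - α) * ∫ s in a..t, h s * (t - s) ^ (α - 1)) +
        (-(∫ s in Set.Ioi a, h s)) := by
      rw [hsplit, hMsplit,
        intervalIntegral.integral_sub (Hint1.const_mul _) hh1,
        intervalIntegral.integral_const_mul]
      ring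
    rw [hre]
    refine (abs_add_le _ _).trans (add_le_add ((abs_add_le _ _).trans (add_le_add ?_ ?_)) ?_)
    · -- first term
      refine (intervalIntegral.abs_integral_le_integral_abs ha0.le).trans ?_
      rw [← intervalIntegral.integral_const_mul]
      refine le_of_eq (intervalIntegral.integral_congr ?_)
      intro s hs
      rw [uIcc_of_le ha0.le] at hs
      have hs0 : 0 ≤ s := hs.1
      have hst : s < t := lt_of_le_of_lt hs.2 hat
      have hts : 0 < t - s := by linarith
      have hmono : t ^ (α - 1) ≤ (t - s) ^ (α - 1) :=
        Real.rpow_le_rpow_of_nonpos hts (by linarith) hα1'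
      have hfac : t ^ (1 - α) * ((t - s) ^ (α - 1) - t ^ (α - 1)) =
          t ^ (1 - α) * (t - s) ^ (α - 1) - 1 := by
        rw [mul_sub, hpow1]
      have hnn : 0 ≤ t ^ (1 - α) * (t - s) ^ (α - 1) - 1 := by
        rw [← hfac]
        exact mul_nonneg (Real.rpow_nonneg ht.le _) (by linarith)
      show |t ^ (1 - α) * (h s * (t - s) ^ (α - 1)) - h s| =
          t ^ (1 - α) * (|h s| * ((t - s) ^ (α - 1) - t ^ (α - 1)))
      have heq : t ^ (1 - α) * (h s * (t - s) ^ (α - 1)) - h s =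
          h s * (t ^ (1 - α) * (t - s) ^ (α - 1) - 1) := by ring
      rw [heq, abs_mul, abs_of_nonneg hnn, ← hfac]
      ring
    · -- second term
      rw [abs_mul, abs_of_nonneg (Real.rpow_nonneg ht.le _)]
      refine mul_le_mul_of_nonneg_left ?_ (Real.rpow_nonneg ht.le _)
      refine (intervalIntegral.abs_integral_le_integral_abs hat.le).trans ?_
      refine le_of_eq (intervalIntegral.integral_congr ?_)
      intro s hs
      rw [uIcc_of_le hat.le] at hs
      have hts : (0:ℝ) ≤ t - s := by linarith [hs.2]
      show |h s * (t - s) ^ (α - 1)| = |h s| * (t - s) ^ (α - 1)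
      rw [abs_mul, abs_of_nonneg (Real.rpow_nonneg hts _)]
    · -- third term
      rw [abs_neg]
      simpa [Real.norm_eq_abs] using
        norm_integral_le_integral_norm (μ := volume.restrict (Set.Ioi a)) h
  · -- Part 2 : the two quantitative bounds
    set C1 : ℝ := ((1 - δ) ^ (α - 1) - 1) * K / δ with hC1
    set C2 : ℝ := C * δ ^ (-γ) * (1 - δ) ^ α / α with hC2
    have h1δ : (0:ℝ) < 1 - δ := by linarith
    have hge1 : 1 ≤ (1 - δ) ^ (α - 1) :=
      Real.one_le_rpow_of_pos_of_le_one_of_nonpos h1δ (by linarith) hα1'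
    have hC1nn : 0 ≤ C1 := by
      apply div_nonneg _ hδ0.le
      exact mul_nonneg (by linarith) hK0
    have hC2nn : 0 ≤ C2 := by
      apply div_nonneg _ hα0.le
      exact mul_nonneg (mul_nonneg hC.le (Real.rpow_nonneg hδ0.le _))
        (Real.rpow_nonneg h1δ.le _)
    refine ⟨C1 + C2 + 1, by linarith, ?_, ?_⟩
    · -- first bound
      intro t ht2
      have ht : (0:ℝ) < t := by linarith
      set a := δ * t with ha
      have ha0 : 0 < a := mul_pos hδ0 ht
      have hat : a < t := by
        have : δ * t < 1 * t := mul_lt_mul_of_pos_right hδ1 ht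
        simpa using this
      obtain ⟨Hint, Aint⟩ := key t ht
      have hpow1 : t ^ (1 - α) * t ^ (α - 1) = 1 := by
        rw [← Real.rpow_add ht]; norm_num
      have habs1 : IntervalIntegrable (fun s => |h s|) volume 0 a :=
        (intervalIntegrable_iff_integrableOn_Ioc_of_le ha0.le).2
          (habs.mono_set Ioc_subset_Ioi_self)
      have Aint1 : IntervalIntegrable (fun s => |h s| * (t - s) ^ (α - 1)) volume 0 a :=
        (intervalIntegrable_iff_integrableOn_Ioc_of_le ha0.le).2
          (Aint.mono_set (Ioc_subset_Ioc le_rfl hat.le))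
      have hLHSint : IntervalIntegrable
          (fun s => |h s| * ((t - s) ^ (α - 1) - t ^ (α - 1))) volume 0 a := by
        have := Aint1.sub (habs1.mul_const (t ^ (α - 1)))
        refine this.congr ?_
        intro s _; dsimp only
        ring
      -- pointwise bound
      have hstep : (∫ s in (0:ℝ)..a, |h s| * ((t - s) ^ (α - 1) - t ^ (α - 1))) ≤
          ∫ s in (0:ℝ)..a, |h s| * (((1 - δ) ^ (α - 1) - 1) * t ^ (α - 1)) := by
        refine intervalIntegral.integral_mono_on ha0.le hLHSint
          (habs1.mul_const _) ?_
        intro s hs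
        have hts : 0 < t - a := by linarith
        have hts' : t - a ≤ t - s := by linarith [hs.2]
        have h1 : (t - s) ^ (α - 1) ≤ (t - a) ^ (α - 1) :=
          Real.rpow_le_rpow_of_nonpos hts hts' hα1'
        have h2 : (t - a) ^ (α - 1) = (1 - δ) ^ (α - 1) * t ^ (α - 1) := by
          rw [← Real.mul_rpow h1δ.le ht.le]
          congr 1
          rw [ha]; ring
        refine mul_le_mul_of_nonneg_left ?_ (abs_nonneg _)
        rw [sub_mul, one_mul]
        have := h1.trans_eq h2
        linarith
      have htail : (∫ s in (0:ℝ)..a, |h s|) ≤ K := by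
        rw [intervalIntegral.integral_of_le ha0.le, hK]
        refine setIntegral_mono_set habs ?_ ?_
        · exact Filter.Eventually.of_forall fun s => abs_nonneg _
        · exact Filter.Eventually.of_forall Ioc_subset_Ioi_self
      calc t ^ (1 - α) * (∫ s in (0:ℝ)..a, |h s| * ((t - s) ^ (α - 1) - t ^ (α - 1)))
          ≤ t ^ (1 - α) * (∫ s in (0:ℝ)..a, |h s| * (((1 - δ) ^ (α - 1) - 1) * t ^ (α - 1))) :=
            mul_le_mul_of_nonneg_left hstep (Real.rpow_nonneg ht.le _)
        _ = ((1 - δ) ^ (α - 1) - 1) * (t ^ (1 - α) * t ^ (α - 1)) *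
              (∫ s in (0:ℝ)..a, |h s|) := by
            rw [intervalIntegral.integral_mul_const]
            ring
        _ = ((1 - δ) ^ (α - 1) - 1) * (∫ s in (0:ℝ)..a, |h s|) := by
            rw [hpow1]; ring
        _ ≤ ((1 - δ) ^ (α - 1) - 1) * K :=
            mul_le_mul_of_nonneg_left htail (by linarith)
        _ = C1 * δ := by
            rw [hC1]; field_simp
        _ ≤ (C1 + C2 + 1) * δ := by nlinarith
    · -- second bound
      intro t ht2
      have ht : (0:ℝ) < t := by linarith
      set a := δ * t with ha
      have ha0 : 0 < a := mul_pos hδ0 ht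
      have hat : a < t := by
        have : δ * t < 1 * t := mul_lt_mul_of_pos_right hδ1 ht
        simpa using this
      obtain ⟨Hint, Aint⟩ := key t ht
      have Aint2 : IntervalIntegrable (fun s => |h s| * (t - s) ^ (α - 1)) volume a t :=
        (intervalIntegrable_iff_integrableOn_Ioc_of_le hat.le).2
          (Aint.mono_set (Ioc_subset_Ioc ha0.le le_rfl))
      have Grt : IntervalIntegrable (fun s : ℝ => (t - s) ^ (α - 1)) volume a t := by
        have := (intervalIntegrable_rpow' (by linarith : (-1:ℝ) < α - 1)
          (a := t - t) (b := t - a)).comp_sub_left t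
        simpa using this.symm
      -- pointwise bound on [a, t]
      have hstep : (∫ s in a..t, |h s| * (t - s) ^ (α - 1)) ≤
          ∫ s in a..t, (C * (1 + a) ^ (-γ)) * (t - s) ^ (α - 1) := by
        refine intervalIntegral.integral_mono_on hat.le Aint2
          (Grt.const_mul _) ?_
        intro s hs
        have hsa : a ≤ s := hs.1
        have h1 : |h s| ≤ C * (1 + s) ^ (-γ) := hbound s (le_trans ha0.le hsa)
        have h2 : (1 + s) ^ (-γ) ≤ (1 + a) ^ (-γ) :=
          Real.rpow_le_rpow_of_nonpos (by linarith) (by linarith) (by linarith)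
        refine mul_le_mul_of_nonneg_right ?_ (Real.rpow_nonneg (by linarith [hs.2]) _)
        exact h1.trans (mul_le_mul_of_nonneg_left h2 hC.le)
      have hval : (∫ s in a..t, (t - s) ^ (α - 1)) = (t - a) ^ α / α := by
        have hcs := intervalIntegral.integral_comp_sub_left
          (a := a) (b := t) (fun x : ℝ => x ^ (α - 1)) t
        rw [hcs, integral_rpow (Or.inl (by linarith))]
        have he : α - 1 + 1 = α := by ring
        rw [he, sub_self, Real.zero_rpow hα0.ne', sub_zero]
      have h1a : (1 + a) ^ (-γ) ≤ a ^ (-γ) :=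
        Real.rpow_le_rpow_of_nonpos ha0 (by linarith) (by linarith)
      have hcalc : (∫ s in a..t, (C * (1 + a) ^ (-γ)) * (t - s) ^ (α - 1)) ≤
          C * a ^ (-γ) * ((t - a) ^ α / α) := by
        rw [intervalIntegral.integral_const_mul, hval]
        have hnn : (0:ℝ) ≤ (t - a) ^ α / α :=
          div_nonneg (Real.rpow_nonneg (by linarith) _) hα0.le
        refine mul_le_mul_of_nonneg_right ?_ hnn
        exact mul_le_mul_of_nonneg_left h1a hC.le
      have hfin : t ^ (1 - α) * (C * a ^ (-γ) * ((t - a) ^ α / α)) = C2 * t ^ (1 - γ) := by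
        rw [hC2, ha]
        have e1 : (δ * t) ^ (-γ) = δ ^ (-γ) * t ^ (-γ) := Real.mul_rpow hδ0.le ht.le
        have e2 : (t - δ * t) ^ α = (1 - δ) ^ α * t ^ α := by
          rw [← Real.mul_rpow h1δ.le ht.le]; congr 1; ring
        rw [e1, e2]
        have e3 : t ^ (1 - α) * (t ^ (-γ) * t ^ α) = t ^ (1 - γ) := by
          rw [← Real.rpow_add ht, ← Real.rpow_add ht]
          congr 1; ring
        calc t ^ (1 - α) * (C * (δ ^ (-γ) * t ^ (-γ)) * ((1 - δ) ^ α * t ^ α / α))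
            = C * δ ^ (-γ) * (1 - δ) ^ α / α * (t ^ (1 - α) * (t ^ (-γ) * t ^ α)) := by
              ring
          _ = C * δ ^ (-γ) * (1 - δ) ^ α / α * t ^ (1 - γ) := by rw [e3]
      calc t ^ (1 - α) * (∫ s in a..t, |h s| * (t - s) ^ (α - 1))
          ≤ t ^ (1 - α) * (C * a ^ (-γ) * ((t - a) ^ α / α)) := by
            refine mul_le_mul_of_nonneg_left (hstep.trans hcalc) (Real.rpow_nonneg ht.le _)
        _ = C2 * t ^ (1 - γ) := hfin
        _ ≤ (C1 + C2 + 1) * t ^ (1 - γ) := by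
            refine mul_le_mul_of_nonneg_right (by linarith) (Real.rpow_nonneg ht.le _)
  · -- Part 3 : the tail tends to zero
    have hlin : Tendsto (fun t : ℝ => δ * t) atTop atTop :=
      Tendsto.const_mul_atTop hδ0 tendsto_id
    have h1 : Tendsto (fun t : ℝ => ∫ s in (0:ℝ)..(δ * t), |h s|) atTop (nhds K) :=
      intervalIntegral_tendsto_integral_Ioi 0 habs hlin
    have h2 : Tendsto (fun t : ℝ => K - ∫ s in (0:ℝ)..(δ * t), |h s|) atTop (nhds 0) := by
      have := tendsto_const_nhds (x := K) (f := atTop (α := ℝ)).sub h1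
      simpa using this
    refine h2.congr' ?_
    filter_upwards [eventually_gt_atTop (0:ℝ)] with t ht
    have ha0 : 0 < δ * t := mul_pos hδ0 ht
    have hsplit : K = (∫ s in Ioc (0:ℝ) (δ * t), |h s|) + ∫ s in Set.Ioi (δ * t), |h s| := by
      rw [hK, ← setIntegral_union (Ioc_disjoint_Ioi le_rfl) measurableSet_Ioi
        (habs.mono_set Ioc_subset_Ioi_self) (habs.mono_set (Ioi_subset_Ioi ha0.le)),
        Ioc_union_Ioi_eq_Ioi ha0.le]
    rw [intervalIntegral.integral_of_le ha0.le, hsplit]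
    ring
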